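/- Assume M is geodesic and let x = ((t_1,p_1),…,(t_n,p_n)) and x̂ = ((t̂_1,p̂_1),…,(t̂_n,p̂_n)) be request sequences of the same length n. For every feasible pair (σ, T) for x there exists a feasible pair (σ', T') for x̂ with T' ≤ T + ε_time + 2·ε_pos; consequently Z(x̂) ≤ Z(x) + ε_time + 2·ε_pos. (Paper's Lemma: Z'_{x̂} ≤ Z*_{x̂} ≤ Z^OPT + ε_time + 2 ε_pos, proved by delaying the route by ε_time and inserting a detour of length 2·dist(p_i, p̂_i) at each request.) -/

import Mathlib

/-- A schedule of a unit-speed server: a 1-Lipschitz map that stays at the origin `o`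
at all times `≤ 0`. -/
def IsSchedule {M : Type*} [MetricSpace M] (o : M) (σ : ℝ → M) : Prop :=
  LipschitzWith 1 σ ∧ ∀ s : ℝ, s ≤ 0 → σ s = o

/-- Feasibility of a pair `(σ, T)` for the request sequence `x`: the schedule ends at the
origin at time `T` and visits each request position no earlier than its release time. -/
def Feasible {M : Type*} [MetricSpace M] (o : M) {n : ℕ} (x : Fin n → ℝ × M)
    (σ : ℝ → M) (T : ℝ) : Prop :=
  IsSchedule o σ ∧ 0 ≤ T ∧ σ T = o ∧
    ∀ i : Fin n, ∃ s : ℝ, (x i).1 ≤ s ∧ s ≤ T ∧ σ s = (x i).2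

/-- The optimal offline completion time of the request sequence `x`. -/
noncomputable def Z {M : Type*} [MetricSpace M] (o : M) {n : ℕ} (x : Fin n → ℝ × M) : ℝ :=
  sInf {T : ℝ | ∃ σ : ℝ → M, Feasible o x σ T}

/-- The optimal length of a closed tour through the request positions of `x`,
ignoring release times. -/
noncomputable def L {M : Type*} [MetricSpace M] (o : M) {n : ℕ} (x : Fin n → ℝ × M) : ℝ :=
  sInf {S : ℝ | 0 ≤ S ∧ ∃ γ : ℝ → M, LipschitzWith 1 γ ∧ γ 0 = o ∧ γ S = o ∧
    ∀ i : Fin n, ∃ s : ℝ, 0 ≤ s ∧ s ≤ S ∧ γ s = (x i).2}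

/-- `M` is geodesic: any two points are joined by a unit-speed geodesic. -/
def IsGeodesicSpace (M : Type*) [MetricSpace M] : Prop :=
  ∀ a b : M, ∃ γ : ℝ → M, LipschitzWith 1 γ ∧ γ 0 = a ∧ γ (dist a b) = b

/-- From any feasible pair for the actual instance `x` one obtains a feasible pair for the
predicted instance `x̂` at an extra cost of `ε_time + 2 ε_pos`; consequently
`Z(x̂) ≤ Z(x) + ε_time + 2 ε_pos`. -/
lemma lip_glue {M : Type*} [MetricSpace M] {f g : ℝ → M} (hf : LipschitzWith 1 f)
    (hg : LipschitzWith 1 g) {a : ℝ} (h : f a = g a) :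
    LipschitzWith 1 (fun u => if u ≤ a then f u else g u) := by
  apply LipschitzWith.of_dist_le_mul
  intro u v
  simp only [NNReal.coe_one, one_mul]
  rcases le_or_gt u a with hu | hu <;> rcases le_or_gt v a with hv | hv
  · rw [if_pos hu, if_pos hv]; simpa using hf.dist_le_mul u v
  · rw [if_pos hu, if_neg (not_le.2 hv)]
    calc dist (f u) (g v) ≤ dist (f u) (f a) + dist (f a) (g v) := dist_triangle _ _ _
      _ = dist (f u) (f a) + dist (g a) (g v) := by rw [h]
      _ ≤ dist u a + dist a v := by
          have h1 := hf.dist_le_mul u a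
          have h2 := hg.dist_le_mul a v
          simp only [NNReal.coe_one, one_mul] at h1 h2
          linarith
      _ ≤ dist u v := by
          rw [Real.dist_eq, Real.dist_eq, Real.dist_eq,
            abs_of_nonpos (by linarith : u - a ≤ 0),
            abs_of_nonpos (by linarith : a - v ≤ 0),
            abs_of_nonpos (by linarith : u - v ≤ 0)]
          linarith
  · rw [if_neg (not_le.2 hu), if_pos hv]
    calc dist (g u) (f v) ≤ dist (g u) (g a) + dist (g a) (f v) := dist_triangle _ _ _
      _ = dist (g u) (g a) + dist (f a) (f v) := by rw [h]
      _ ≤ dist u a + dist a v := by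
          have h1 := hg.dist_le_mul u a
          have h2 := hf.dist_le_mul a v
          simp only [NNReal.coe_one, one_mul] at h1 h2
          linarith
      _ ≤ dist u v := by
          rw [Real.dist_eq, Real.dist_eq, Real.dist_eq,
            abs_of_nonneg (by linarith : 0 ≤ u - a),
            abs_of_nonneg (by linarith : 0 ≤ a - v),
            abs_of_nonneg (by linarith : 0 ≤ u - v)]
          linarith
  · rw [if_neg (not_le.2 hu), if_neg (not_le.2 hv)]
    simpa using hg.dist_le_mul u v

lemma lip_shift (c : ℝ) : LipschitzWith 1 (fun u : ℝ => u - c) := by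
  apply LipschitzWith.of_dist_le_mul
  intro u v
  simp [Real.dist_eq]

lemma lip_refl (c : ℝ) : LipschitzWith 1 (fun u : ℝ => c - u) := by
  apply LipschitzWith.of_dist_le_mul
  intro u v
  simp [Real.dist_eq, abs_sub_comm (c - u)]
  rw [abs_sub_comm]
  apply le_of_eq
  congr 1
  ring

lemma detour_one {M : Type*} [MetricSpace M] (o : M) (hgeo : IsGeodesicSpace M)
    {n : ℕ} (y : Fin n → ℝ × M) (hy : ∀ i, 0 ≤ (y i).1) (i : Fin n) (q : M)
    (σ : ℝ → M) (T : ℝ) (h : Feasible o y σ T) :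
    ∃ σ' T', Feasible o (Function.update y i ((y i).1, q)) σ' T' ∧
      T' ≤ T + 2 * dist q (y i).2 := by
  obtain ⟨⟨hlip, h0⟩, hT0, hTo, hvis⟩ := h
  obtain ⟨s, hs1, hs2, hs3⟩ := hvis i
  set p := (y i).2 with hp
  obtain ⟨γ, hγ, hγ0, hγd⟩ := hgeo p q
  set d := dist p q with hd
  have hd0 : 0 ≤ d := dist_nonneg
  have hs0 : 0 ≤ s := le_trans (hy i) hs1
  -- the detoured schedule
  set g3 : ℝ → M := fun u => σ (u - 2 * d) with hg3
  set g2 : ℝ → M := fun u => if u ≤ s + 2 * d then γ (s + 2 * d - u) else g3 u with hg2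
  set g1 : ℝ → M := fun u => if u ≤ s + d then γ (u - s) else g2 u with hg1
  set σ' : ℝ → M := fun u => if u ≤ s then σ u else g1 u with hσ'
  have hlip3 : LipschitzWith 1 g3 := by (have h := hlip.comp (lip_shift (2 * d)); rw [one_mul] at h; exact h)
  have hlipγ2 : LipschitzWith 1 (fun u => γ (s + 2 * d - u)) := by
    (have h := hγ.comp (lip_refl (s + 2 * d)); rw [one_mul] at h; exact h)
  have hlipγ1 : LipschitzWith 1 (fun u => γ (u - s)) := by
    (have h := hγ.comp (lip_shift s); rw [one_mul] at h; exact h)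
  have hlip2 : LipschitzWith 1 g2 := by
    refine lip_glue hlipγ2 hlip3 ?_
    simp only [hg3]
    rw [show s + 2 * d - (s + 2 * d) = 0 by ring, show s + 2 * d - 2 * d = s by ring, hγ0, hs3]
  have hlip1 : LipschitzWith 1 g1 := by
    refine lip_glue hlipγ1 hlip2 ?_
    simp only [hg2]
    rw [if_pos (by linarith : s + d ≤ s + 2 * d),
      show s + d - s = d by ring, show s + 2 * d - (s + d) = d by ring]
  have hlip' : LipschitzWith 1 σ' := by
    refine lip_glue hlip hlip1 ?_
    simp only [hg1]
    rw [if_pos (by linarith : s ≤ s + d), sub_self, hγ0, hs3]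
  refine ⟨σ', T + 2 * d, ⟨⟨hlip', ?_⟩, by linarith, ?_, ?_⟩, le_of_eq (by rw [dist_comm])⟩
  · intro u hu
    simp only [hσ', if_pos (le_trans hu hs0)]
    exact h0 u hu
  · -- σ' (T + 2d) = o
    simp only [hσ', hg1, hg2, hg3]
    rcases le_or_gt (T + 2 * d) s with hc | hc
    · have : d = 0 := by linarith
      rw [if_pos hc]
      rw [show T + 2 * d = T by rw [this]; ring, hTo]
    · rw [if_neg (not_le.2 hc)]
      rcases le_or_gt (T + 2 * d) (s + d) with hc2 | hc2
      · exfalso; linarith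
      · rw [if_neg (not_le.2 hc2)]
        rcases le_or_gt (T + 2 * d) (s + 2 * d) with hc3 | hc3
        · have hTs : s = T := le_antisymm hs2 (by linarith)
          rw [if_pos hc3, show s + 2 * d - (T + 2 * d) = 0 by rw [hTs]; ring, hγ0]
          rw [← hs3, hTs, hTo]
        · rw [if_neg (not_le.2 hc3), show T + 2 * d - 2 * d = T by ring, hTo]
  · -- visits
    intro j
    rcases eq_or_ne j i with rfl | hji
    · refine ⟨s + d, ?_, by linarith, ?_⟩
      · rw [Function.update_self]; simpa using by linarith [hs1]
      · rw [Function.update_self]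
        simp only [hσ', hg1]
        rcases le_or_gt (s + d) s with hc | hc
        · have hd' : d = 0 := by linarith
          have : p = q := dist_eq_zero.mp (by rw [← hd, hd'])
          rw [if_pos hc, show s + d = s by rw [hd']; ring, hs3, this]
        · rw [if_neg (not_le.2 hc), if_pos le_rfl, show s + d - s = d by ring, hγd]
    · obtain ⟨sj, hj1, hj2, hj3⟩ := hvis j
      rw [Function.update_of_ne hji]
      rcases le_or_gt sj s with hc | hc
      · exact ⟨sj, hj1, by linarith, by simp only [hσ', if_pos hc]; exact hj3⟩
      · refine ⟨sj + 2 * d, by linarith, by linarith, ?_⟩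
        simp only [hσ', hg1, hg2, hg3]
        rw [if_neg (not_le.2 (by linarith : s < sj + 2 * d)),
          if_neg (not_le.2 (by linarith : s + d < sj + 2 * d)),
          if_neg (not_le.2 (by linarith : s + 2 * d < sj + 2 * d)),
          show sj + 2 * d - 2 * d = sj by ring]
        exact hj3

lemma detours {M : Type*} [MetricSpace M] (o : M) (hgeo : IsGeodesicSpace M)
    {n : ℕ} (y : Fin n → ℝ × M) (hy : ∀ i, 0 ≤ (y i).1) (q : Fin n → M)
    (s : Finset (Fin n)) :
    ∀ σ T, Feasible o y σ T → ∃ σ' T',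
      Feasible o (fun i => if i ∈ s then ((y i).1, q i) else y i) σ' T' ∧
      T' ≤ T + 2 * ∑ i ∈ s, dist (q i) (y i).2 := by
  induction s using Finset.induction with
  | empty =>
    intro σ T h
    exact ⟨σ, T, by simpa using h, by simp⟩
  | @insert a s ha ih =>
    intro σ T h
    obtain ⟨σ₁, T₁, h1, hle1⟩ := ih σ T h
    set y₁ : Fin n → ℝ × M := fun i => if i ∈ s then ((y i).1, q i) else y i with hy₁def
    have hy₁ : ∀ i, 0 ≤ (y₁ i).1 := by
      intro i
      simp only [hy₁def]
      split <;> simp [hy i]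
    obtain ⟨σ₂, T₂, h2, hle2⟩ := detour_one o hgeo y₁ hy₁ a (q a) σ₁ T₁ h1
    have hya : y₁ a = y a := by simp [hy₁def, ha]
    have heq : (fun i => if i ∈ insert a s then ((y i).1, q i) else y i)
        = Function.update y₁ a ((y₁ a).1, q a) := by
      funext i
      rcases eq_or_ne i a with rfl | hia
      · simp [Function.update_self, hya]
      · rw [Function.update_of_ne hia]
        simp only [hy₁def, Finset.mem_insert]
        rcases Decidable.em (i ∈ s) with hi | hi <;> simp [hi, hia]
    refine ⟨σ₂, T₂, heq ▸ h2, ?_⟩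
    rw [Finset.sum_insert ha]
    rw [hya] at hle2
    linarith

lemma feasible_exists {M : Type*} [MetricSpace M] (o : M) (hgeo : IsGeodesicSpace M)
    {n : ℕ} (y : Fin n → ℝ × M) (hy : ∀ i, 0 ≤ (y i).1) :
    ∃ σ T, Feasible o y σ T := by
  set T0 := ∑ i, (y i).1 with hT0def
  have hconst : LipschitzWith 1 (fun _ : ℝ => o) := by
    apply LipschitzWith.of_dist_le_mul
    intro u v
    simp [dist_nonneg]
  have hbase : Feasible o (fun i => ((y i).1, o)) (fun _ => o) T0 := by
    refine ⟨⟨hconst, fun _ _ => rfl⟩, Finset.sum_nonneg (fun i _ => hy i), rfl, fun i => ?_⟩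
    exact ⟨(y i).1, le_rfl, Finset.single_le_sum (fun j _ => hy j) (Finset.mem_univ i), rfl⟩
  obtain ⟨σ', T', h, _⟩ := detours o hgeo (fun i => ((y i).1, o)) (fun i => hy i)
    (fun i => (y i).2) Finset.univ _ _ hbase
  have heq : (fun i => if i ∈ Finset.univ then (((y i).1, o).1, (y i).2) else ((y i).1, o)) = y := by
    funext i
    simp
  exact ⟨σ', T', heq ▸ h⟩

theorem predicted_le_actual {M : Type*} [MetricSpace M] (o : M)
    (hgeo : IsGeodesicSpace M) {n : ℕ}
    (x xh : Fin n → ℝ × M) (hx : ∀ i, 0 ≤ (x i).1) (hxh : ∀ i, 0 ≤ (xh i).1) :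
    (∀ σ T, Feasible o x σ T →
      ∃ σ' T', Feasible o xh σ' T' ∧
        T' ≤ T + (⨆ i, |(xh i).1 - (x i).1|) + 2 * ∑ i, dist (xh i).2 (x i).2) ∧
    Z o xh ≤ Z o x + (⨆ i, |(xh i).1 - (x i).1|) + 2 * ∑ i, dist (xh i).2 (x i).2 := by
  set ε := ⨆ i, |(xh i).1 - (x i).1| with hεdef
  have hε0 : 0 ≤ ε := Real.iSup_nonneg (fun i => abs_nonneg _)
  have main : ∀ σ T, Feasible o x σ T →
      ∃ σ' T', Feasible o xh σ' T' ∧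
        T' ≤ T + ε + 2 * ∑ i, dist (xh i).2 (x i).2 := by
    intro σ T ⟨⟨hlip, h0⟩, hT0, hTo, hvis⟩
    -- delayed schedule, feasible for the instance with predicted times, actual positions
    set y : Fin n → ℝ × M := fun i => ((xh i).1, (x i).2) with hydef
    have hy : ∀ i, 0 ≤ (y i).1 := fun i => hxh i
    have hdel : Feasible o y (fun u => σ (u - ε)) (T + ε) := by
      refine ⟨⟨by (have h := hlip.comp (lip_shift ε); rw [one_mul] at h; exact h), fun u hu => h0 _ (by linarith)⟩,
        by linarith, by simp [hTo], fun i => ?_⟩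
      obtain ⟨s, hs1, hs2, hs3⟩ := hvis i
      have hle : (xh i).1 - (x i).1 ≤ ε := by
        refine le_trans (le_abs_self _) ?_
        exact le_ciSup (f := fun j => |(xh j).1 - (x j).1|)
          (Set.Finite.bddAbove (Set.finite_range _)) i
      exact ⟨s + ε, by simp only [hydef]; linarith, by linarith,
        by simp only [add_sub_cancel_right]; exact hs3⟩
    obtain ⟨σ', T', h', hle'⟩ := detours o hgeo y hy (fun i => (xh i).2) Finset.univ _ _ hdel
    have heq : (fun i => if i ∈ Finset.univ then ((y i).1, (xh i).2) else y i) = xh := by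
      funext i
      simp [hydef]
    rw [heq] at h'
    refine ⟨σ', T', h', ?_⟩
    simp only [hydef] at hle'
    simpa using hle'
  refine ⟨main, ?_⟩
  -- the sInf inequality
  obtain ⟨σ₀, T₀, h₀⟩ := feasible_exists o hgeo x hx
  set c := ε + 2 * ∑ i, dist (xh i).2 (x i).2 with hcdef
  have hBbd : BddBelow {T : ℝ | ∃ σ : ℝ → M, Feasible o xh σ T} :=
    ⟨0, fun T ⟨σ, hσ⟩ => hσ.2.1⟩
  have key : ∀ T ∈ {T : ℝ | ∃ σ : ℝ → M, Feasible o x σ T}, Z o xh - c ≤ T := by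
    rintro T ⟨σ, hσ⟩
    obtain ⟨σ', T', h', hle'⟩ := main σ T hσ
    have h1 : Z o xh ≤ T' := csInf_le hBbd ⟨σ', h'⟩
    simp only [hcdef]
    linarith
  have h2 : Z o xh - c ≤ Z o x :=
    le_csInf ⟨T₀, σ₀, h₀⟩ key
  simp only [hcdef] at h2
  linarith
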